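/- For the linear interpolation path x_t = (1−t)x_0 + t ε with a fixed data point x_0 ∈ R^d, define the conditional distribution of the average velocity u_{0,t} = (x_t − x_0)/t given (x_0, t), namely p(u | x_0, t) = N(u; (α_t − 1)x_0/t, σ_t²/t² I) with α_t = 1−t, σ_t = t. Then the Fisher information metric of this exponential family with respect to the parameters (x_0, t) is the constant matrix diag(1, 0) (up to block structure), i.e. the metric is independent of (x_0, t). -/

import Mathlib

/-- Constancy of the Fisher information metric of the conditional
average-velocity family under the linear schedule `α_t = 1 − t`, `σ_t = t`.
The family `p(u | x₀, t) = N(u; (α_t − 1)x₀/t, σ_t²/t² I)` is an exponential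
family with natural parameter `η(x₀,t) = (t(α_t−1)/σ_t² · x₀, −t²/(2σ_t²))`
and expectation parameter `μ(x₀,t) = (m, ‖m‖² + d σ_t²/t²)` with
`m = (α_t−1)/t · x₀`; the Fisher metric `I = (∂η/∂γ)ᵀ(∂μ/∂γ)` is the constant
block matrix `diag(1, 0)`, independent of `(x₀, t)`. -/
theorem stmt19 (d : ℕ) (α σ : ℝ → ℝ)
    (hα : α = fun t => 1 - t) (hσ : σ = fun t => t)
    (η μf : EuclideanSpace ℝ (Fin d) × ℝ → EuclideanSpace ℝ (Fin d) × ℝ)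
    (hη : η = fun γ =>
      ((γ.2 * (α γ.2 - 1) / (σ γ.2) ^ 2) • γ.1,
        -(γ.2 ^ 2) / (2 * (σ γ.2) ^ 2)))
    (hμ : μf = fun γ =>
      (((α γ.2 - 1) / γ.2) • γ.1,
        ‖((α γ.2 - 1) / γ.2) • γ.1‖ ^ 2 + (d : ℝ) * (σ γ.2) ^ 2 / γ.2 ^ 2))
    (γ : EuclideanSpace ℝ (Fin d) × ℝ) (ht : γ.2 ≠ 0)
    (u v : EuclideanSpace ℝ (Fin d) × ℝ) :
    (inner ℝ ((fderiv ℝ η γ) u).1 ((fderiv ℝ μf γ) v).1 : ℝ)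
        + ((fderiv ℝ η γ) u).2 * ((fderiv ℝ μf γ) v).2
      = (inner ℝ u.1 v.1 : ℝ) := by
  subst hα hσ hη hμ
  have hopen : IsOpen {p : EuclideanSpace ℝ (Fin d) × ℝ | p.2 ≠ 0} :=
    isOpen_ne.preimage continuous_snd
  have hmem : {p : EuclideanSpace ℝ (Fin d) × ℝ | p.2 ≠ 0} ∈ nhds γ :=
    hopen.mem_nhds ht
  -- η agrees near γ with p ↦ (-p.1, -1/2)
  have hηe : (fun p : EuclideanSpace ℝ (Fin d) × ℝ =>
      ((p.2 * ((fun t => 1 - t) p.2 - 1) / ((fun t => t) p.2) ^ 2) • p.1,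
        -(p.2 ^ 2) / (2 * ((fun t => t) p.2) ^ 2)))
      =ᶠ[nhds γ] (fun p => ((-1 : ℝ) • p.1, (-1/2 : ℝ))) := by
    filter_upwards [hmem] with p hp
    have h1 : p.2 * (1 - p.2 - 1) / p.2 ^ 2 = -1 := by field_simp; ring
    have h2 : -(p.2 ^ 2) / (2 * p.2 ^ 2) = -1/2 := by field_simp
    rw [h1, h2]
  have hμe : (fun p : EuclideanSpace ℝ (Fin d) × ℝ =>
      ((((fun t => 1 - t) p.2 - 1) / p.2) • p.1,
        ‖(((fun t => 1 - t) p.2 - 1) / p.2) • p.1‖ ^ 2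
          + (d : ℝ) * ((fun t => t) p.2) ^ 2 / p.2 ^ 2))
      =ᶠ[nhds γ] (fun p => ((-1 : ℝ) • p.1, ‖p.1‖ ^ 2 + (d : ℝ))) := by
    filter_upwards [hmem] with p hp
    have h1 : (1 - p.2 - 1) / p.2 = -1 := by field_simp; ring
    rw [h1]
    have h2 : ‖(-1 : ℝ) • p.1‖ ^ 2 + (d : ℝ) * p.2 ^ 2 / p.2 ^ 2 = ‖p.1‖ ^ 2 + d := by
      rw [norm_smul]; field_simp; simp
    rw [h2]
  -- derivative of the simplified η
  have hη' : HasFDerivAt (fun p : EuclideanSpace ℝ (Fin d) × ℝ =>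
        ((-1 : ℝ) • p.1, (-1/2 : ℝ)))
      (((-1 : ℝ) • ContinuousLinearMap.fst ℝ (EuclideanSpace ℝ (Fin d)) ℝ).prod 0) γ := by
    apply HasFDerivAt.prodMk
    · exact (hasFDerivAt_fst).const_smul (-1 : ℝ)
    · exact hasFDerivAt_const _ _
  have hμ' : HasFDerivAt (fun p : EuclideanSpace ℝ (Fin d) × ℝ =>
        ((-1 : ℝ) • p.1, ‖p.1‖ ^ 2 + (d : ℝ)))
      (((-1 : ℝ) • ContinuousLinearMap.fst ℝ (EuclideanSpace ℝ (Fin d)) ℝ).prod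
        (2 • (innerSL ℝ γ.1).comp
          (ContinuousLinearMap.fst ℝ (EuclideanSpace ℝ (Fin d)) ℝ))) γ := by
    apply HasFDerivAt.prodMk
    · exact (hasFDerivAt_fst).const_smul (-1 : ℝ)
    · have h := (hasFDerivAt_fst :
        HasFDerivAt Prod.fst (ContinuousLinearMap.fst ℝ (EuclideanSpace ℝ (Fin d)) ℝ) γ).norm_sq
      simpa using h.add_const (d : ℝ)
  have hη'' := hη'.congr_of_eventuallyEq hηe
  have hμ'' := hμ'.congr_of_eventuallyEq hμe
  rw [hη''.fderiv, hμ''.fderiv]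
  simp [real_inner_smul_left, real_inner_smul_right]
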